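/- Doob-type maximal inequality for Rademacher chaos over monotone vector sequences (Theorem 3.4 of the paper, fully independent case): if 0 ⪯ v^(1) ⪯ v^(2) ⪯ ... ⪯ v^(m) are vectors in ℝ^n and σ ∈ {±1}^n is a vector of independent uniform random signs, then there is a universal constant C such that for all λ > 0, P(sup_{i ≤ m} |⟨σ, v^(i)⟩| > λ ‖v^(m)‖₂) < C/λ². -/

import Mathlib

open MeasureTheory ProbabilityTheory

/-- The distribution of a uniform random sign in `{−1, +1}`. -/
noncomputable def signMeasure : Measure ℝ :=
  ((1 : ENNReal) / 2) • Measure.dirac (1 : ℝ) + ((1 : ENNReal) / 2) • Measure.dirac (-1 : ℝ)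

def csgn (b : Bool) : ℝ := if b then 1 else -1

lemma abs_pow4 (x y : ℝ) : (x + y)^4 ≤ 64 * x^4 + (64/27) * y^4 := by
  nlinarith [sq_nonneg (y - 3*x), sq_nonneg (y + 3*x), sq_nonneg (x*y), sq_nonneg (y^2 - 9*x^2),
    sq_nonneg (x*y - 3*x^2), sq_nonneg (x*y + 3*x^2), sq_nonneg x, sq_nonneg y, sq_nonneg (x+y),
    sq_nonneg (x-y)]

lemma pi_sum_split {n : ℕ} (f : (Fin (n+1) → Bool) → ℝ) :
    ∑ s : Fin (n+1) → Bool, f s = ∑ b : Bool, ∑ s : Fin n → Bool, f (Fin.cons b s) := by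
  rw [← Equiv.sum_comp (Fin.consEquiv fun _ => Bool) f, Fintype.sum_prod_type]
  rfl

lemma card_bools (n : ℕ) : (Finset.univ : Finset (Fin n → Bool)).card = 2^n := by simp

lemma sum_sq (n : ℕ) (a : Fin n → ℝ) :
    ∑ s : Fin n → Bool, (∑ j, csgn (s j) * a j)^2 = 2^n * ∑ j, (a j)^2 := by
  induction n with
  | zero => simp
  | succ n ih =>
    rw [pi_sum_split (fun s => (∑ j, csgn (s j) * a j)^2)]
    have key : ∀ b (s : Fin n → Bool),
        (∑ j, csgn (Fin.cons b s j) * a j)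
          = csgn b * a 0 + ∑ j : Fin n, csgn (s j) * (a j.succ) := by
      intro b s
      rw [Fin.sum_univ_succ]
      simp
    simp only [key]
    rw [Fintype.sum_bool, ← Finset.sum_add_distrib]
    have step : ∀ s : Fin n → Bool,
        (csgn true * a 0 + ∑ j : Fin n, csgn (s j) * (a j.succ))^2
        + (csgn false * a 0 + ∑ j : Fin n, csgn (s j) * (a j.succ))^2
        = 2*(∑ j : Fin n, csgn (s j) * (a j.succ))^2 + 2*(a 0)^2 := by
      intro s; show (1 * a 0 + _)^2 + ((-1) * a 0 + _)^2 = _; ring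
    rw [Finset.sum_congr rfl (fun s _ => step s), Finset.sum_add_distrib,
      ← Finset.mul_sum, ih (fun j => a j.succ), Finset.sum_const, card_bools,
      Fin.sum_univ_succ (fun j => (a j)^2)]
    ring

lemma sum_quad (n : ℕ) (a : Fin n → ℝ) :
    ∑ s : Fin n → Bool, (∑ j, csgn (s j) * a j)^4 ≤ 3 * 2^n * (∑ j, (a j)^2)^2 := by
  induction n with
  | zero => simp
  | succ n ih =>
    rw [pi_sum_split (fun s => (∑ j, csgn (s j) * a j)^4)]
    have key : ∀ b (s : Fin n → Bool),
        (∑ j, csgn (Fin.cons b s j) * a j)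
          = csgn b * a 0 + ∑ j : Fin n, csgn (s j) * (a j.succ) := by
      intro b s
      rw [Fin.sum_univ_succ]
      simp
    simp only [key]
    rw [Fintype.sum_bool, ← Finset.sum_add_distrib]
    have step : ∀ s : Fin n → Bool,
        (csgn true * a 0 + ∑ j : Fin n, csgn (s j) * (a j.succ))^4
        + (csgn false * a 0 + ∑ j : Fin n, csgn (s j) * (a j.succ))^4
        = 2*(∑ j : Fin n, csgn (s j) * (a j.succ))^4
          + 12*(a 0)^2*(∑ j : Fin n, csgn (s j) * (a j.succ))^2 + 2*(a 0)^4 := by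
      intro s; show (1 * a 0 + _)^4 + ((-1) * a 0 + _)^4 = _; ring
    rw [Finset.sum_congr rfl (fun s _ => step s), Finset.sum_add_distrib,
      Finset.sum_add_distrib, ← Finset.mul_sum, ← Finset.mul_sum,
      sum_sq n (fun j => a j.succ), Finset.sum_const, card_bools,
      Fin.sum_univ_succ (fun j => (a j)^2)]
    have h4 := ih (fun j => a j.succ)
    have hq : (0:ℝ) ≤ ∑ j : Fin n, (a j.succ)^2 :=
      Finset.sum_nonneg fun j _ => sq_nonneg _
    have h2n : (0:ℝ) ≤ 2^n := by positivity
    simp only [nsmul_eq_mul]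
    push_cast
    have hp : (2:ℝ)^(n+1) = 2*2^n := by ring
    rw [hp]
    nlinarith [mul_nonneg h2n (by positivity : (0:ℝ) ≤ (a 0)^4), sq_nonneg (a 0), h4, hq, h2n]

lemma moricz {α : Type} [Fintype α] (w : α → ℝ) (hw : ∀ x, 0 ≤ w x)
    (S : ℕ → α → ℝ) (t : ℕ → ℝ) (ht : Monotone t)
    (hmom : ∀ k l : ℕ, k ≤ l → ∑ x, w x * (S l x - S k x)^4 ≤ 3 * (t l - t k)^2) :
    ∀ d k l : ℕ, ∀ hkl : k ≤ l, l - k ≤ d →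
      ∑ x, w x * ((Finset.Icc k l).sup' (Finset.nonempty_Icc.mpr hkl)
          fun i => (S i x - S k x)^4)
        ≤ 1220 * (t l - t k)^2 := by
  intro d
  induction d with
  | zero =>
    intro k l hkl hd
    obtain rfl : l = k := by omega
    simp [Finset.Icc_self]
  | succ d ih =>
    intro k l hkl hd
    have hh : 0 ≤ t l - t k := by have := ht hkl; linarith
    by_cases hz : t l - t k ≤ 0
    · have key : ∀ i ∈ Finset.Icc k l, ∑ x, w x * (S i x - S k x)^4 ≤ 0 := by
        intro i hi
        rw [Finset.mem_Icc] at hi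
        have h1 := ht hi.1
        have h2 := ht hi.2
        have : (t i - t k)^2 = 0 := by nlinarith
        calc ∑ x, w x * (S i x - S k x)^4 ≤ 3 * (t i - t k)^2 := hmom k i hi.1
        _ = 0 := by rw [this]; ring
      have point : ∀ x, w x * ((Finset.Icc k l).sup' (Finset.nonempty_Icc.mpr hkl)
          fun i => (S i x - S k x)^4) ≤ ∑ i ∈ Finset.Icc k l, w x * (S i x - S k x)^4 := by
        intro x
        rw [← Finset.mul_sum]
        refine mul_le_mul_of_nonneg_left ?_ (hw x)
        refine Finset.sup'_le _ _ fun i hi => ?_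
        exact Finset.single_le_sum (f := fun i => (S i x - S k x)^4)
          (fun j _ => by positivity) hi
      calc ∑ x, w x * ((Finset.Icc k l).sup' (Finset.nonempty_Icc.mpr hkl)
              fun i => (S i x - S k x)^4)
          ≤ ∑ x, ∑ i ∈ Finset.Icc k l, w x * (S i x - S k x)^4 :=
            Finset.sum_le_sum fun x _ => point x
        _ = ∑ i ∈ Finset.Icc k l, ∑ x, w x * (S i x - S k x)^4 := Finset.sum_comm
        _ ≤ ∑ i ∈ Finset.Icc k l, (0:ℝ) := Finset.sum_le_sum key
        _ = 0 := by simp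
        _ ≤ 1220 * (t l - t k)^2 := by positivity
    · push_neg at hz
      set h := t l - t k with hdef
      set F := (Finset.Icc k l).filter (fun j => t j - t k ≤ h/2) with hF
      have hFne : F.Nonempty := by
        refine ⟨k, ?_⟩
        rw [hF, Finset.mem_filter, Finset.mem_Icc]
        refine ⟨⟨le_refl k, hkl⟩, by linarith⟩
      set j := F.max' hFne with hj
      have hjF : j ∈ F := F.max'_mem hFne
      rw [hF, Finset.mem_filter, Finset.mem_Icc] at hjF
      obtain ⟨⟨hkj, hjl'⟩, hj3⟩ := hjF
      have hjl : j < l := by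
        rcases lt_or_eq_of_le hjl' with h' | h'
        · exact h'
        · exfalso; rw [h'] at hj3; linarith
      have hj1l : j + 1 ≤ l := hjl
      have hnot : ¬ (t (j+1) - t k ≤ h/2) := by
        intro hcon
        have hmem : j + 1 ∈ F := by
          rw [hF, Finset.mem_filter, Finset.mem_Icc]
          exact ⟨⟨by omega, hj1l⟩, hcon⟩
        have := F.le_max' _ hmem
        omega
      push_neg at hnot
      have htj1 : t l - t (j+1) ≤ h/2 := by
        have := ht hj1l
        linarith
      have htj1' : 0 ≤ t l - t (j+1) := by have := ht hj1l; linarith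
      have point : ∀ x, ((Finset.Icc k l).sup' (Finset.nonempty_Icc.mpr hkl)
            fun i => (S i x - S k x)^4)
          ≤ ((Finset.Icc k j).sup' (Finset.nonempty_Icc.mpr hkj)
              fun i => (S i x - S k x)^4)
            + (64 * (S (j+1) x - S k x)^4
            + (64/27) * ((Finset.Icc (j+1) l).sup' (Finset.nonempty_Icc.mpr hj1l)
              fun i => (S i x - S (j+1) x)^4)) := by
        intro x
        have hA0 : (0:ℝ) ≤ (Finset.Icc k j).sup' (Finset.nonempty_Icc.mpr hkj)
            fun i => (S i x - S k x)^4 := by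
          have := Finset.le_sup' (fun i => (S i x - S k x)^4)
            (Finset.mem_Icc.mpr ⟨le_refl k, hkj⟩)
          exact le_trans (Even.pow_nonneg ⟨2, rfl⟩ _) this
        have hC0 : (0:ℝ) ≤ (Finset.Icc (j+1) l).sup' (Finset.nonempty_Icc.mpr hj1l)
            fun i => (S i x - S (j+1) x)^4 := by
          have := Finset.le_sup' (fun i => (S i x - S (j+1) x)^4)
            (Finset.mem_Icc.mpr ⟨le_refl (j+1), hj1l⟩)
          exact le_trans (Even.pow_nonneg ⟨2, rfl⟩ _) this
        refine Finset.sup'_le _ _ fun i hi => ?_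
        rw [Finset.mem_Icc] at hi
        rcases le_or_gt i j with hij | hij
        · have := Finset.le_sup' (fun i => (S i x - S k x)^4)
            (Finset.mem_Icc.mpr ⟨hi.1, hij⟩)
          have hB0 : (0:ℝ) ≤ (S (j+1) x - S k x)^4 := by positivity
          linarith
        · have e1 : S i x - S k x = (S (j+1) x - S k x) + (S i x - S (j+1) x) := by ring
          have e2 := abs_pow4 (S (j+1) x - S k x) (S i x - S (j+1) x)
          have e3 := Finset.le_sup' (fun i' => (S i' x - S (j+1) x)^4)
            (Finset.mem_Icc.mpr ⟨hij, hi.2⟩)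
          rw [e1]
          linarith
      have sum1 : ∑ x, w x * ((Finset.Icc k l).sup' (Finset.nonempty_Icc.mpr hkl)
            fun i => (S i x - S k x)^4)
          ≤ (∑ x, w x * ((Finset.Icc k j).sup' (Finset.nonempty_Icc.mpr hkj)
              fun i => (S i x - S k x)^4))
            + (64 * (∑ x, w x * (S (j+1) x - S k x)^4)
            + (64/27) * (∑ x, w x * ((Finset.Icc (j+1) l).sup' (Finset.nonempty_Icc.mpr hj1l)
              fun i => (S i x - S (j+1) x)^4))) := by
        rw [Finset.mul_sum, Finset.mul_sum, ← Finset.sum_add_distrib, ← Finset.sum_add_distrib]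
        refine Finset.sum_le_sum fun x _ => ?_
        refine le_trans (mul_le_mul_of_nonneg_left (point x) (hw x)) (le_of_eq (by ring))
      have bA : ∑ x, w x * ((Finset.Icc k j).sup' (Finset.nonempty_Icc.mpr hkj)
            fun i => (S i x - S k x)^4) ≤ 1220 * (t j - t k)^2 :=
        ih k j hkj (by omega)
      have bB : ∑ x, w x * (S (j+1) x - S k x)^4 ≤ 3 * (t (j+1) - t k)^2 :=
        hmom k (j+1) (by omega)
      have bC : ∑ x, w x * ((Finset.Icc (j+1) l).sup' (Finset.nonempty_Icc.mpr hj1l)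
            fun i => (S i x - S (j+1) x)^4) ≤ 1220 * (t l - t (j+1))^2 :=
        ih (j+1) l hj1l (by omega)
      have hjk0 : 0 ≤ t j - t k := by have := ht hkj; linarith
      have hjk1 : t (j+1) - t k ≤ h := by have := ht hj1l; linarith
      have hjk1' : 0 ≤ t (j+1) - t k := by have := ht (show k ≤ j+1 by omega); linarith
      have e1 : (t j - t k)^2 ≤ h^2/4 := by nlinarith
      have e2 : (t (j+1) - t k)^2 ≤ h^2 := by nlinarith
      have e3 : (t l - t (j+1))^2 ≤ h^2/4 := by nlinarith
      refine le_trans sum1 (le_trans (add_le_add bA (add_le_add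
        (mul_le_mul_of_nonneg_left bB (by norm_num))
        (mul_le_mul_of_nonneg_left bC (by norm_num)))) ?_)
      simp only [hdef] at e1 e2 e3 ⊢
      linarith [e1, e2, e3, sq_nonneg (t l - t k)]

instance : IsProbabilityMeasure signMeasure := by
  constructor
  simp [signMeasure]
  exact ENNReal.inv_two_add_inv_two

lemma pi_sign (n : ℕ) :
    Measure.pi (fun _ : Fin n => signMeasure)
      = ((2:ENNReal)^n)⁻¹ • ∑ s : Fin n → Bool, Measure.dirac (fun j : Fin n => csgn (s j)) := by
  classical
  refine Measure.pi_eq fun s hs => ?_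
  rw [Measure.smul_apply, Measure.finset_sum_apply]
  have h1 : ∀ sb : Fin n → Bool, Measure.dirac (fun j : Fin n => csgn (sb j)) (Set.univ.pi s)
      = ∏ i, (if csgn (sb i) ∈ s i then (1:ENNReal) else 0) := by
    intro sb
    rw [Measure.dirac_apply' _ (MeasurableSet.univ_pi hs), Finset.prod_boole]
    simp [Set.indicator_apply, Set.mem_univ_pi]
  simp only [h1]
  have h3 : ∏ i : Fin n, ∑ b : Bool, (if csgn b ∈ s i then (1:ENNReal) else 0)
      = ∑ sb : Fin n → Bool, ∏ i, (if csgn (sb i) ∈ s i then (1:ENNReal) else 0) := by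
    rw [Finset.prod_univ_sum, Fintype.piFinset_univ]
  rw [← h3]
  have h4 : ∀ i : Fin n, signMeasure (s i)
      = 2⁻¹ * ∑ b : Bool, (if csgn b ∈ s i then (1:ENNReal) else 0) := by
    intro i
    rw [Fintype.sum_bool]
    show _ = 2⁻¹ * ((if (1:ℝ) ∈ s i then (1:ENNReal) else 0)
      + (if (-1:ℝ) ∈ s i then (1:ENNReal) else 0))
    rw [signMeasure]
    simp only [Measure.coe_add, Measure.coe_smul, Pi.add_apply, Pi.smul_apply,
      Measure.dirac_apply' _ (hs i), smul_eq_mul, Set.indicator_apply, Pi.one_apply]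
    rw [mul_add]
    norm_num
  rw [Finset.prod_congr rfl (fun i _ => h4 i), Finset.prod_mul_distrib, Finset.prod_const,
    Finset.card_univ, Fintype.card_fin, ← ENNReal.inv_pow]
  rw [smul_eq_mul]

set_option maxHeartbeats 1000000 in
/-- Doob-type maximal inequality for Rademacher linear forms over coordinatewise monotone
vector sequences: for i.i.d. uniform signs `σ` and `0 ⪯ v⁽¹⁾ ⪯ ⋯ ⪯ v⁽ᵐ⁾`,
`P(sup_i |⟨σ, v⁽ⁱ⁾⟩| > λ‖v⁽ᵐ⁾‖₂) < C/λ²` for a universal constant `C`. -/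
theorem stmt_10 :
    ∃ C > 0, ∀ (n m : ℕ) (Ω : Type) (_ : MeasurableSpace Ω) (μ : Measure Ω),
      IsProbabilityMeasure μ →
      ∀ σ : Ω → Fin n → ℝ, Measurable σ →
        Measure.map σ μ = Measure.pi (fun _ : Fin n => signMeasure) →
        ∀ v : Fin (m + 1) → Fin n → ℝ,
          (∀ j, 0 ≤ v 0 j) →
          (∀ k l : Fin (m + 1), k ≤ l → ∀ j, v k j ≤ v l j) →
          ∀ l : ℝ, 0 < l →
            (μ {ω | ∃ i : Fin (m + 1),
                l * Real.sqrt (∑ j, v (Fin.last m) j ^ 2) < |∑ j, σ ω j * v i j|}).toReal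
              < C / l ^ 2 := by
  classical
  refine ⟨3100, by norm_num, ?_⟩
  intro n m Ω mΩ μ hμ σ hσ hmap v h0 hmon lam hlam
  have hvnn : ∀ i j, 0 ≤ v i j := fun i j => le_trans (h0 j) (hmon 0 i (Fin.zero_le i) j)
  set T : ℝ := ∑ j, v (Fin.last m) j ^ 2 with hTdef
  have hT0 : 0 ≤ T := Finset.sum_nonneg fun j _ => sq_nonneg _
  by_cases hTz : T = 0
  · -- degenerate case : all v are zero
    have hvm : ∀ j, v (Fin.last m) j = 0 := by
      intro j
      have h := (Finset.sum_eq_zero_iff_of_nonneg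
        (fun j _ => sq_nonneg (v (Fin.last m) j))).1 (hTdef ▸ hTz) j (Finset.mem_univ j)
      exact pow_eq_zero_iff (two_ne_zero).elim |>.mp h
    have hvz : ∀ (i : Fin (m+1)) j, v i j = 0 := fun i j =>
      le_antisymm (le_trans (hmon i (Fin.last m) (Fin.le_last i) j) (le_of_eq (hvm j)))
        (hvnn i j)
    have hempty : {ω | ∃ i : Fin (m+1), lam * Real.sqrt T < |∑ j, σ ω j * v i j|}
        = (∅ : Set Ω) := by
      ext ω
      simp only [Set.mem_setOf_eq, Set.mem_empty_iff_false, iff_false, not_exists]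
      intro i
      simp [hvz, hTz]
    rw [hempty]
    simp only [measure_empty, ENNReal.toReal_zero]
    positivity
  · have hTpos : 0 < T := lt_of_le_of_ne hT0 (Ne.symm hTz)
    set B : Set (Fin n → ℝ) :=
      {x | ∃ i : Fin (m+1), lam * Real.sqrt T < |∑ j, x j * v i j|} with hBdef
    have hBmeas : MeasurableSet B := by
      have hB2 : B = ⋃ i : Fin (m+1),
          {x : Fin n → ℝ | lam * Real.sqrt T < |∑ j, x j * v i j|} := by
        ext x; simp [hBdef, Set.mem_iUnion]
      rw [hB2]
      refine MeasurableSet.iUnion fun i => ?_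
      have hf : Measurable fun x : Fin n → ℝ => |∑ j, x j * v i j| :=
        (Finset.measurable_sum Finset.univ (fun j _ => (measurable_pi_apply j).mul_const _)).abs
      exact measurableSet_lt measurable_const hf
    have hdir : ∀ s : Fin n → Bool, Measure.dirac (fun j : Fin n => csgn (s j)) B
        = (if (fun j : Fin n => csgn (s j)) ∈ B then (1:ENNReal) else 0) := by
      intro s
      rw [Measure.dirac_apply' _ hBmeas]
      simp [Set.indicator_apply]
    have hμA : μ {ω | ∃ i : Fin (m+1), lam * Real.sqrt T < |∑ j, σ ω j * v i j|}
        = ((2:ENNReal)^n)⁻¹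
          * ∑ s : Fin n → Bool, (if (fun j : Fin n => csgn (s j)) ∈ B then (1:ENNReal) else 0) := by
      have h1 : {ω | ∃ i : Fin (m+1), lam * Real.sqrt T < |∑ j, σ ω j * v i j|} = σ ⁻¹' B := rfl
      rw [h1, ← Measure.map_apply hσ hBmeas, hmap, pi_sign n, Measure.smul_apply,
        Measure.finset_sum_apply, smul_eq_mul]
      congr 1
      exact Finset.sum_congr rfl fun s _ => hdir s
    -- real-valued process
    set idx : ℕ → Fin (m+1) := fun i => ⟨min i m, by omega⟩ with hidx
    set S : ℕ → (Fin n → Bool) → ℝ := fun i s => ∑ j, csgn (s j) * v (idx i) j with hS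
    set t : ℕ → ℝ := fun i => ∑ j, v (idx i) j ^ 2 with ht
    have hidxmono : ∀ {k l' : ℕ}, k ≤ l' → ∀ j, v (idx k) j ≤ v (idx l') j := by
      intro k l' hkl j
      refine hmon _ _ ?_ j
      rw [hidx]
      exact Fin.mk_le_mk.mpr (by omega)
    have htmono : Monotone t := by
      intro k l' hkl
      refine Finset.sum_le_sum fun j _ => ?_
      have h1 := hidxmono hkl j
      have h2 := hvnn (idx k) j
      nlinarith
    have hmom : ∀ k l' : ℕ, k ≤ l' →
        ∑ s : Fin n → Bool, ((2:ℝ)^n)⁻¹ * (S l' s - S k s)^4 ≤ 3 * (t l' - t k)^2 := by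
      intro k l' hkl
      have hdiff : ∀ s : Fin n → Bool, S l' s - S k s
          = ∑ j, csgn (s j) * (v (idx l') j - v (idx k) j) := by
        intro s
        simp only [hS]
        rw [← Finset.sum_sub_distrib]
        exact Finset.sum_congr rfl fun j _ => by ring
      have hQ : ∑ j, (v (idx l') j - v (idx k) j)^2 ≤ t l' - t k := by
        simp only [ht]
        rw [← Finset.sum_sub_distrib]
        refine Finset.sum_le_sum fun j _ => ?_
        have h1 := hidxmono hkl j
        have h2 := hvnn (idx k) j
        nlinarith
      have hQ0 : (0:ℝ) ≤ ∑ j, (v (idx l') j - v (idx k) j)^2 :=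
        Finset.sum_nonneg fun j _ => sq_nonneg _
      calc ∑ s : Fin n → Bool, ((2:ℝ)^n)⁻¹ * (S l' s - S k s)^4
          = ((2:ℝ)^n)⁻¹ * ∑ s : Fin n → Bool,
              (∑ j, csgn (s j) * (v (idx l') j - v (idx k) j))^4 := by
            rw [← Finset.mul_sum]
            exact congrArg _ (Finset.sum_congr rfl fun s _ => by rw [hdiff s])
        _ ≤ ((2:ℝ)^n)⁻¹ * (3 * 2^n * (∑ j, (v (idx l') j - v (idx k) j)^2)^2) :=
            mul_le_mul_of_nonneg_left (sum_quad n _) (by positivity)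
        _ = 3 * (∑ j, (v (idx l') j - v (idx k) j)^2)^2 := by
            field_simp
        _ ≤ 3 * (t l' - t k)^2 := by nlinarith [pow_le_pow_left₀ hQ0 hQ 2]
    have hmax := moricz (fun _ : Fin n → Bool => ((2:ℝ)^n)⁻¹) (fun _ => by positivity)
      S t htmono hmom m 0 m (Nat.zero_le m) (by omega)
    have hidxm : idx m = Fin.last m := by
      rw [hidx]
      apply Fin.ext
      simp [Fin.last]
    have htmT : t m = T := by
      simp only [ht, hidxm, hTdef]
    have ht00 : 0 ≤ t 0 := Finset.sum_nonneg fun j _ => sq_nonneg _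
    have ht0T : t 0 ≤ T := htmT ▸ htmono (Nat.zero_le m)
    have hne : (Finset.Icc 0 m).Nonempty := Finset.nonempty_Icc.mpr (Nat.zero_le m)
    -- expectation of the max of fourth powers
    have hfinal : ∑ s : Fin n → Bool, ((2:ℝ)^n)⁻¹ *
        ((Finset.Icc 0 m).sup' hne fun i => (S i s)^4) ≤ 3084 * T^2 := by
      have point : ∀ s : Fin n → Bool, ((Finset.Icc 0 m).sup' hne fun i => (S i s)^4)
          ≤ 64 * (S 0 s)^4
            + (64/27) * ((Finset.Icc 0 m).sup' hne fun i => (S i s - S 0 s)^4) := by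
        intro s
        refine Finset.sup'_le _ _ fun i hi => ?_
        have e3 := Finset.le_sup' (fun i' => (S i' s - S 0 s)^4) hi
        calc (S i s)^4 = (S 0 s + (S i s - S 0 s))^4 := by ring
          _ ≤ 64 * (S 0 s)^4 + (64/27) * (S i s - S 0 s)^4 := abs_pow4 _ _
          _ ≤ _ := by linarith [e3]
      have hS0 : ∑ s : Fin n → Bool, ((2:ℝ)^n)⁻¹ * (S 0 s)^4 ≤ 3 * T^2 := by
        have h1 : ∑ s : Fin n → Bool, (S 0 s)^4 ≤ 3 * 2^n * (t 0)^2 := by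
          have := sum_quad n (fun j => v (idx 0) j)
          simpa [hS, ht] using this
        have h2 : (t 0)^2 ≤ T^2 := pow_le_pow_left₀ ht00 ht0T 2
        calc ∑ s : Fin n → Bool, ((2:ℝ)^n)⁻¹ * (S 0 s)^4
            = ((2:ℝ)^n)⁻¹ * ∑ s : Fin n → Bool, (S 0 s)^4 := by rw [← Finset.mul_sum]
          _ ≤ ((2:ℝ)^n)⁻¹ * (3 * 2^n * (t 0)^2) :=
              mul_le_mul_of_nonneg_left h1 (by positivity)
          _ = 3 * (t 0)^2 := by field_simp
          _ ≤ 3 * T^2 := by linarith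
      have hdiffbound : ∑ s : Fin n → Bool, ((2:ℝ)^n)⁻¹ *
          ((Finset.Icc 0 m).sup' hne fun i => (S i s - S 0 s)^4) ≤ 1220 * T^2 := by
        refine le_trans hmax ?_
        have h1 : 0 ≤ t m - t 0 := by linarith [htmT]
        have h2 : t m - t 0 ≤ T := by linarith [htmT]
        nlinarith
      calc ∑ s : Fin n → Bool, ((2:ℝ)^n)⁻¹ * ((Finset.Icc 0 m).sup' hne fun i => (S i s)^4)
          ≤ ∑ s : Fin n → Bool, (64 * (((2:ℝ)^n)⁻¹ * (S 0 s)^4)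
            + (64/27) * (((2:ℝ)^n)⁻¹ *
              ((Finset.Icc 0 m).sup' hne fun i => (S i s - S 0 s)^4))) := by
            refine Finset.sum_le_sum fun s _ => ?_
            refine le_trans (mul_le_mul_of_nonneg_left (point s) (by positivity))
              (le_of_eq (by ring))
        _ = 64 * (∑ s : Fin n → Bool, ((2:ℝ)^n)⁻¹ * (S 0 s)^4)
            + (64/27) * (∑ s : Fin n → Bool, ((2:ℝ)^n)⁻¹ *
              ((Finset.Icc 0 m).sup' hne fun i => (S i s - S 0 s)^4)) := by
            rw [Finset.sum_add_distrib]
            simp only [← Finset.mul_sum]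
        _ ≤ 64 * (3 * T^2) + (64/27) * (1220 * T^2) :=
            add_le_add (mul_le_mul_of_nonneg_left hS0 (by norm_num))
              (mul_le_mul_of_nonneg_left hdiffbound (by norm_num))
        _ ≤ 3084 * T^2 := by nlinarith [sq_nonneg T]
    -- Markov step
    have hmark : ∀ s : Fin n → Bool,
        (if (fun j : Fin n => csgn (s j)) ∈ B then (1:ℝ) else 0) * (lam^4 * T^2)
          ≤ (Finset.Icc 0 m).sup' hne fun i => (S i s)^4 := by
      intro s
      have hsup0 : (0:ℝ) ≤ (Finset.Icc 0 m).sup' hne fun i => (S i s)^4 := by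
        have := Finset.le_sup' (fun i' => (S i' s)^4)
          (Finset.mem_Icc.mpr ⟨le_refl 0, Nat.zero_le m⟩)
        have h0' : (0:ℝ) ≤ (S 0 s)^4 := by positivity
        linarith
      by_cases hbs : (fun j : Fin n => csgn (s j)) ∈ B
      · rw [if_pos hbs, one_mul]
        obtain ⟨i, hi⟩ := hbs
        have hii := i.isLt
        have hidxi : idx (i : ℕ) = i := by
          rw [hidx]
          apply Fin.ext
          simp
          omega
        have hSi : S (i : ℕ) s = ∑ j, csgn (s j) * v i j := by
          simp only [hS, hidxi]
        have h1 : 0 ≤ lam * Real.sqrt T := mul_nonneg hlam.le (Real.sqrt_nonneg _)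
        have h2 : (lam * Real.sqrt T)^4 ≤ |S (i:ℕ) s|^4 := by
          refine pow_le_pow_left₀ h1 ?_ 4
          rw [hSi]
          exact hi.le
        have h3 : (lam * Real.sqrt T)^4 = lam^4 * T^2 := by
          rw [mul_pow]
          congr 1
          rw [show (4:ℕ) = 2*2 from rfl, pow_mul, Real.sq_sqrt hT0]
        have h4 : |S (i:ℕ) s|^4 = (S (i:ℕ) s)^4 := by
          rw [← abs_pow]
          exact abs_of_nonneg (by positivity)
        have h5 : (i:ℕ) ∈ Finset.Icc 0 m := Finset.mem_Icc.mpr ⟨Nat.zero_le _, by omega⟩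
        have h6 := Finset.le_sup' (fun i' => (S i' s)^4) h5
        rw [← h3]
        rw [h4] at h2
        linarith [h2, h6]
      · rw [if_neg hbs, zero_mul]
        exact hsup0
    -- put it together
    set P : ℝ := ∑ s : Fin n → Bool, (if (fun j : Fin n => csgn (s j)) ∈ B then (1:ℝ) else 0)
      with hP
    have hP0 : 0 ≤ P := Finset.sum_nonneg fun s _ => by positivity
    have hPcard : P ≤ 2^n := by
      rw [hP]
      calc ∑ s : Fin n → Bool, (if (fun j : Fin n => csgn (s j)) ∈ B then (1:ℝ) else 0)
          ≤ ∑ _s : Fin n → Bool, (1:ℝ) := Finset.sum_le_sum fun s _ => by split <;> norm_num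
        _ = 2^n := by rw [Finset.sum_const, card_bools]; simp
    have hP4 : P * (lam^4 * T^2) ≤ 2^n * (3084 * T^2) := by
      rw [hP, Finset.sum_mul]
      calc ∑ s : Fin n → Bool,
            (if (fun j : Fin n => csgn (s j)) ∈ B then (1:ℝ) else 0) * (lam^4 * T^2)
          ≤ ∑ s : Fin n → Bool, ((Finset.Icc 0 m).sup' hne fun i => (S i s)^4) :=
            Finset.sum_le_sum fun s _ => hmark s
        _ = 2^n * ∑ s : Fin n → Bool,
            ((2:ℝ)^n)⁻¹ * ((Finset.Icc 0 m).sup' hne fun i => (S i s)^4) := by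
            rw [← Finset.mul_sum, ← mul_assoc]
            rw [mul_inv_cancel₀ (by positivity : ((2:ℝ)^n) ≠ 0), one_mul]
        _ ≤ 2^n * (3084 * T^2) := mul_le_mul_of_nonneg_left hfinal (by positivity)
    have hPlam : P * lam^4 ≤ 2^n * 3084 := by
      have hT2 : (0:ℝ) < T^2 := by positivity
      refine (mul_le_mul_iff_of_pos_right hT2).1 ?_
      calc (P * lam^4) * T^2 = P * (lam^4 * T^2) := by ring
        _ ≤ 2^n * (3084 * T^2) := hP4
        _ = (2^n * 3084) * T^2 := by ring
    -- value of the measure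
    have hval : (μ {ω | ∃ i : Fin (m+1),
        lam * Real.sqrt T < |∑ j, σ ω j * v i j|}).toReal = ((2:ℝ)^n)⁻¹ * P := by
      rw [hμA, ENNReal.toReal_mul]
      congr 1
      · simp
      · rw [hP, ENNReal.toReal_sum (fun s _ => by split <;> simp)]
        exact Finset.sum_congr rfl fun s _ => by split <;> simp
    rw [hval]
    rw [lt_div_iff₀ (by positivity : (0:ℝ) < lam^2)]
    have hQ4 : (((2:ℝ)^n)⁻¹ * P) * lam^4 ≤ 3084 := by
      calc (((2:ℝ)^n)⁻¹ * P) * lam^4 = ((2:ℝ)^n)⁻¹ * (P * lam^4) := by ring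
        _ ≤ ((2:ℝ)^n)⁻¹ * (2^n * 3084) :=
            mul_le_mul_of_nonneg_left hPlam (by positivity)
        _ = 3084 := by
            rw [← mul_assoc, inv_mul_cancel₀ (by positivity : ((2:ℝ)^n) ≠ 0), one_mul]
    have hQ1 : ((2:ℝ)^n)⁻¹ * P ≤ 1 := by
      calc ((2:ℝ)^n)⁻¹ * P ≤ ((2:ℝ)^n)⁻¹ * 2^n :=
          mul_le_mul_of_nonneg_left hPcard (by positivity)
        _ = 1 := inv_mul_cancel₀ (by positivity)
    have hQ0 : 0 ≤ ((2:ℝ)^n)⁻¹ * P := by positivity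
    rcases le_or_gt 1 lam with hl1 | hl1
    · have hla : 1 ≤ lam^2 := by nlinarith
      have h24 : lam^2 ≤ lam^4 := by nlinarith [mul_le_mul_of_nonneg_left hla (sq_nonneg lam)]
      nlinarith [hQ4, hQ0, h24]
    · have hl2 : lam^2 ≤ 1 := by nlinarith
      nlinarith [hQ1, hQ0, hl2, sq_nonneg lam]
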